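/- Let q>1 and s≥0, and let E be a complex Banach algebra. If both ∑_{p≥0} a_p t^p and ∑_{p≥0} b_p t^p belong to E[[t]]_{q,s}, then their Cauchy product ∑_{p≥0} (∑_{k=0}^{p} a_k·b_{p−k}) t^p also belongs to E[[t]]_{q,s}; in particular, E[[t]]_{q,s} is a differential algebra when E is a Banach algebra and s≥0. -/

import Mathlib

lemma stmt3_nat_ineq (k m : ℕ) : k * (k - 1) + m * (m - 1) ≤ (k + m) * ((k + m) - 1) := by
  match k, m with
  | 0, m => simp
  | k+1, 0 => simp
  | k+1, m+1 =>
    simp only [Nat.succ_sub_one]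
    have : (k+1) + (m+1) - 1 = k + m + 1 := by omega
    rw [this]
    nlinarith

/-- for a complex Banach algebra `E`, `q > 1` and `s ≥ 0`, the space
`E[[t]]_{q,s}` is closed under the Cauchy product. -/
theorem stmt3 {E : Type*} [NormedRing E] [NormedAlgebra ℂ E] [CompleteSpace E]
    (q s : ℝ) (hq : 1 < q) (hs : 0 ≤ s) (a b : ℕ → E)
    (ha : ∃ A B α : ℝ, 0 < A ∧ 0 < B ∧ ∀ p : ℕ,
        ‖a p‖ ≤ A * B ^ p * (p.factorial : ℝ) ^ α * q ^ (s * ((p * (p - 1) : ℕ) : ℝ) / 2))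
    (hb : ∃ A B α : ℝ, 0 < A ∧ 0 < B ∧ ∀ p : ℕ,
        ‖b p‖ ≤ A * B ^ p * (p.factorial : ℝ) ^ α * q ^ (s * ((p * (p - 1) : ℕ) : ℝ) / 2)) :
    ∃ A B α : ℝ, 0 < A ∧ 0 < B ∧ ∀ p : ℕ,
        ‖∑ k ∈ Finset.range (p + 1), a k * b (p - k)‖ ≤
          A * B ^ p * (p.factorial : ℝ) ^ α * q ^ (s * ((p * (p - 1) : ℕ) : ℝ) / 2) := by
  obtain ⟨A₁, B₁, α₁, hA₁, hB₁, h₁⟩ := ha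
  obtain ⟨A₂, B₂, α₂, hA₂, hB₂, h₂⟩ := hb
  have hq0 : (0:ℝ) < q := lt_trans one_pos hq
  refine ⟨A₁ * A₂, 2 * max B₁ B₂, max α₁ 0 + max α₂ 0, by positivity, by positivity, fun p => ?_⟩
  set α : ℝ := max α₁ 0 + max α₂ 0 with hα
  set C : ℝ := A₁ * A₂ * (max B₁ B₂) ^ p * (p.factorial : ℝ) ^ α *
      q ^ (s * ((p * (p - 1) : ℕ) : ℝ) / 2) with hC
  have hCpos : 0 ≤ C := by positivity
  have hterm : ∀ k ∈ Finset.range (p + 1), ‖a k * b (p - k)‖ ≤ C := by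
    intro k hk
    rw [Finset.mem_range] at hk
    have hkp : k ≤ p := Nat.lt_succ_iff.mp hk
    set m : ℕ := p - k with hm
    have hkm : k + m = p := by omega
    have step1 : ‖a k * b m‖ ≤ ‖a k‖ * ‖b m‖ := norm_mul_le _ _
    have step2 : ‖a k‖ * ‖b m‖ ≤
        (A₁ * B₁ ^ k * (k.factorial : ℝ) ^ α₁ * q ^ (s * ((k * (k - 1) : ℕ) : ℝ) / 2)) *
        (A₂ * B₂ ^ m * (m.factorial : ℝ) ^ α₂ * q ^ (s * ((m * (m - 1) : ℕ) : ℝ) / 2)) :=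
      mul_le_mul (h₁ k) (h₂ m) (norm_nonneg _) (by positivity)
    have h3 : B₁ ^ k * B₂ ^ m ≤ (max B₁ B₂) ^ p := by
      calc B₁ ^ k * B₂ ^ m ≤ (max B₁ B₂) ^ k * (max B₁ B₂) ^ m :=
            mul_le_mul (pow_le_pow_left₀ hB₁.le (le_max_left _ _) _)
              (pow_le_pow_left₀ hB₂.le (le_max_right _ _) _) (by positivity) (by positivity)
        _ = (max B₁ B₂) ^ p := by rw [← pow_add, hkm]
    have hfk : (1:ℝ) ≤ (k.factorial : ℝ) := by exact_mod_cast Nat.one_le_iff_ne_zero.mpr k.factorial_ne_zero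
    have hfm : (1:ℝ) ≤ (m.factorial : ℝ) := by exact_mod_cast Nat.one_le_iff_ne_zero.mpr m.factorial_ne_zero
    have hfkp : (k.factorial : ℝ) ≤ (p.factorial : ℝ) := by exact_mod_cast Nat.factorial_le hkp
    have hfmp : (m.factorial : ℝ) ≤ (p.factorial : ℝ) := by exact_mod_cast Nat.factorial_le (Nat.sub_le p k)
    have h4 : (k.factorial : ℝ) ^ α₁ * (m.factorial : ℝ) ^ α₂ ≤ (p.factorial : ℝ) ^ α := by
      have e1 : (k.factorial : ℝ) ^ α₁ ≤ (p.factorial : ℝ) ^ (max α₁ 0) :=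
        le_trans (Real.rpow_le_rpow_of_exponent_le hfk (le_max_left _ _))
          (Real.rpow_le_rpow (by positivity) hfkp (le_max_right _ _))
      have e2 : (m.factorial : ℝ) ^ α₂ ≤ (p.factorial : ℝ) ^ (max α₂ 0) :=
        le_trans (Real.rpow_le_rpow_of_exponent_le hfm (le_max_left _ _))
          (Real.rpow_le_rpow (by positivity) hfmp (le_max_right _ _))
      rw [hα, Real.rpow_add (by positivity)]
      exact mul_le_mul e1 e2 (Real.rpow_nonneg (by positivity) _) (by positivity)
    have h5 : q ^ (s * ((k * (k - 1) : ℕ) : ℝ) / 2) * q ^ (s * ((m * (m - 1) : ℕ) : ℝ) / 2) ≤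
        q ^ (s * ((p * (p - 1) : ℕ) : ℝ) / 2) := by
      rw [← Real.rpow_add hq0]
      apply Real.rpow_le_rpow_of_exponent_le hq.le
      have hnat : k * (k - 1) + m * (m - 1) ≤ p * (p - 1) := by
        have := stmt3_nat_ineq k m
        rwa [hkm] at this
      have hcast : ((k * (k - 1) : ℕ) : ℝ) + ((m * (m - 1) : ℕ) : ℝ) ≤ ((p * (p - 1) : ℕ) : ℝ) := by
        exact_mod_cast hnat
      nlinarith
    have rearrange :
        (A₁ * B₁ ^ k * (k.factorial : ℝ) ^ α₁ * q ^ (s * ((k * (k - 1) : ℕ) : ℝ) / 2)) *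
        (A₂ * B₂ ^ m * (m.factorial : ℝ) ^ α₂ * q ^ (s * ((m * (m - 1) : ℕ) : ℝ) / 2)) =
        (A₁ * A₂) * (B₁ ^ k * B₂ ^ m) * ((k.factorial : ℝ) ^ α₁ * (m.factorial : ℝ) ^ α₂) *
        (q ^ (s * ((k * (k - 1) : ℕ) : ℝ) / 2) * q ^ (s * ((m * (m - 1) : ℕ) : ℝ) / 2)) := by ring
    have step3 : (A₁ * A₂) * (B₁ ^ k * B₂ ^ m) *
        ((k.factorial : ℝ) ^ α₁ * (m.factorial : ℝ) ^ α₂) *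
        (q ^ (s * ((k * (k - 1) : ℕ) : ℝ) / 2) * q ^ (s * ((m * (m - 1) : ℕ) : ℝ) / 2)) ≤ C := by
      rw [hC]
      exact mul_le_mul (mul_le_mul (mul_le_mul (le_refl (A₁ * A₂)) h3 (by positivity)
        (by positivity)) h4 (by positivity) (by positivity)) h5 (by positivity) (by positivity)
    calc ‖a k * b m‖ ≤ _ := le_trans step1 step2
      _ ≤ C := by rw [rearrange] at *; exact step3
  have hsum : ‖∑ k ∈ Finset.range (p + 1), a k * b (p - k)‖ ≤ (p + 1 : ℝ) * C := by
    calc ‖∑ k ∈ Finset.range (p + 1), a k * b (p - k)‖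
        ≤ ∑ k ∈ Finset.range (p + 1), ‖a k * b (p - k)‖ := norm_sum_le _ _
      _ ≤ ∑ _ ∈ Finset.range (p + 1), C := Finset.sum_le_sum hterm
      _ = (p + 1 : ℝ) * C := by
          rw [Finset.sum_const, Finset.card_range, nsmul_eq_mul]; push_cast; ring
  have hp2 : (p + 1 : ℝ) ≤ 2 ^ p := by exact_mod_cast (Nat.lt_two_pow_self (n := p))
  calc ‖∑ k ∈ Finset.range (p + 1), a k * b (p - k)‖ ≤ (p + 1 : ℝ) * C := hsum
    _ ≤ 2 ^ p * C := mul_le_mul_of_nonneg_right hp2 hCpos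
    _ = A₁ * A₂ * (2 * max B₁ B₂) ^ p * (p.factorial : ℝ) ^ α *
        q ^ (s * ((p * (p - 1) : ℕ) : ℝ) / 2) := by rw [hC, mul_pow]; ring
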